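/- Let Ai be the Airy function (positive, decreasing on [1,∞), solving y'' = xy, with Ai'(x) ~ -x^{1/2}Ai(x) as x → ∞) and define Ψ on [1,∞) as the solution of -Ψ'' + xΨ = x² Ai with Ψ(1) = 1, Ψ(∞) = 0, Ψ > 0. Writing Ψ = Ai · h with h'(x) = (∫_x^∞ t² Ai(t)² dt)/Ai(x)², one has h'(x) ~ (1/2) x^{3/2}, h(x) ~ (1/5) x^{5/2}, and consequently Ψ(x) ~ (1/5) x^{5/2} Ai(x) and Ψ'(x) ~ -(1/5) x³ Ai(x) as x → ∞. -/

import Mathlib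

open Filter MeasureTheory

private lemma rpow_half_nat (x : ℝ) (hx : 0 ≤ x) (n : ℕ) :
    x ^ ((n : ℝ) / 2) = Real.sqrt x ^ n := by
  rw [Real.sqrt_eq_rpow, ← Real.rpow_natCast (x ^ ((1:ℝ)/2)) n, ← Real.rpow_mul hx]
  congr 1
  ring

private lemma tail_tendsto_zero (f : ℝ → ℝ) (hInt : IntegrableOn f (Set.Ici 1)) :
    Tendsto (fun x => ∫ t in Set.Ioi x, f t) atTop (nhds 0) := by
  have hInt' : IntegrableOn f (Set.Ioi 1) := hInt.mono_set Set.Ioi_subset_Ici_self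
  have key : ∀ x ≥ (1:ℝ), (∫ t in Set.Ioi x, f t) = (∫ t in Set.Ioi 1, f t) - ∫ t in (1:ℝ)..x, f t := by
    intro x hx
    rw [intervalIntegral.integral_of_le hx]
    have hsplit : Set.Ioc 1 x ∪ Set.Ioi x = Set.Ioi (1:ℝ) := Set.Ioc_union_Ioi_eq_Ioi hx
    have := MeasureTheory.setIntegral_union (Set.Ioc_disjoint_Ioi le_rfl)
      measurableSet_Ioi (hInt'.mono_set (by rw [← hsplit]; exact Set.subset_union_left))
      (hInt'.mono_set (by rw [← hsplit]; exact Set.subset_union_right))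
    rw [hsplit] at this
    linarith [this]
  have h2 : Tendsto (fun x => (∫ t in Set.Ioi 1, f t) - ∫ t in (1:ℝ)..x, f t) atTop (nhds 0) := by
    have := MeasureTheory.intervalIntegral_tendsto_integral_Ioi 1 hInt' tendsto_id
    have := (tendsto_const_nhds (x := (∫ t in Set.Ioi 1, f t)) (f := atTop)).sub this
    simpa using this
  exact h2.congr' (by filter_upwards [eventually_ge_atTop (1:ℝ)] with x hx using (key x hx).symm)

private lemma tail_hasDeriv (f : ℝ → ℝ) (hc : Continuous f) (hInt : IntegrableOn f (Set.Ici 1))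
    {x : ℝ} (hx : 1 < x) :
    HasDerivAt (fun y => ∫ t in Set.Ioi y, f t) (-f x) x := by
  have hInt' : IntegrableOn f (Set.Ioi 1) := hInt.mono_set Set.Ioi_subset_Ici_self
  have key : ∀ y ≥ (1:ℝ), (∫ t in Set.Ioi y, f t) = (∫ t in Set.Ioi 1, f t) - ∫ t in (1:ℝ)..y, f t := by
    intro y hy
    rw [intervalIntegral.integral_of_le hy]
    have hsplit : Set.Ioc 1 y ∪ Set.Ioi y = Set.Ioi (1:ℝ) := Set.Ioc_union_Ioi_eq_Ioi hy
    have := MeasureTheory.setIntegral_union (Set.Ioc_disjoint_Ioi le_rfl)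
      measurableSet_Ioi (hInt'.mono_set (by rw [← hsplit]; exact Set.subset_union_left))
      (hInt'.mono_set (by rw [← hsplit]; exact Set.subset_union_right))
    rw [hsplit] at this
    linarith [this]
  have hD : HasDerivAt (fun y => (∫ t in Set.Ioi 1, f t) - ∫ t in (1:ℝ)..y, f t) (-f x) x := by
    have := intervalIntegral.integral_hasDerivAt_right
      (hc.intervalIntegrable 1 x) (hc.stronglyMeasurableAtFilter _ _) hc.continuousAt
    simpa using (this.const_sub (∫ t in Set.Ioi 1, f t))
  have hev : (fun y => ∫ t in Set.Ioi y, f t) =ᶠ[nhds x]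
      fun y => (∫ t in Set.Ioi 1, f t) - ∫ t in (1:ℝ)..y, f t := by
    filter_upwards [eventually_gt_nhds hx] with y hy using key y hy.le
  exact hD.congr_of_eventuallyEq hev

private lemma decay (Ai : ℝ → ℝ) (hAi : ContDiff ℝ 2 Ai) (hpos : ∀ x ≥ (1:ℝ), 0 < Ai x)
    (hasym : Tendsto (fun x => deriv Ai x / (Real.sqrt x * Ai x)) atTop (nhds (-1))) :
    Tendsto (fun x => (1/2) * x ^ ((3:ℝ)/2) * Ai x ^ 2) atTop (nhds 0) := by
  have hAiD : ∀ x, HasDerivAt Ai (deriv Ai x) x :=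
    fun x => ((hAi.differentiable (by simp)) x).hasDerivAt
  have hev : ∀ᶠ x in atTop, (1:ℝ) ≤ x ∧ deriv Ai x / (Real.sqrt x * Ai x) < -1/2 :=
    (eventually_ge_atTop 1).and (hasym.eventually_lt_const (by norm_num))
  obtain ⟨a, ha⟩ := eventually_atTop.mp hev
  have ha1 : (1:ℝ) ≤ a := (ha a le_rfl).1
  have hderiv : ∀ x ≥ a, deriv Ai x ≤ -(1/2) * Ai x := by
    intro x hx
    obtain ⟨hx1, hlt⟩ := ha x hx
    have hs : (1:ℝ) ≤ Real.sqrt x := by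
      rw [show (1:ℝ) = Real.sqrt 1 by simp]; exact Real.sqrt_le_sqrt hx1
    have hAp := hpos x hx1
    have hdenom : 0 < Real.sqrt x * Ai x := by positivity
    have := (div_lt_iff₀ hdenom).mp hlt
    nlinarith [hs, hAp]
  set φ : ℝ → ℝ := fun x => Ai x * Real.exp (x/2) with hφdef
  have hφD : ∀ x, HasDerivAt φ (deriv Ai x * Real.exp (x/2) + Ai x * (Real.exp (x/2) * (1/2))) x := by
    intro x
    have he : HasDerivAt (fun x : ℝ => Real.exp (x/2)) (Real.exp (x/2) * (1/2)) x :=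
      ((hasDerivAt_id' (x := x)).div_const 2).exp
    exact (hAiD x).mul he
  have hanti : AntitoneOn φ (Set.Ici a) := by
    apply antitoneOn_of_deriv_nonpos (convex_Ici a)
      (fun x _ => ((hφD x).continuousAt).continuousWithinAt)
      (fun x _ => ((hφD x).differentiableAt).differentiableWithinAt)
    intro x hx
    rw [interior_Ici] at hx
    rw [(hφD x).deriv]
    have h1 := hderiv x (le_of_lt hx)
    have h2 : 0 < Real.exp (x/2) := Real.exp_pos _
    nlinarith
  have hbound : ∀ x ≥ a, Ai x ≤ (Ai a * Real.exp (a/2)) * Real.exp (-(x/2)) := by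
    intro x hx
    have hm := hanti (Set.mem_Ici.mpr le_rfl) (Set.mem_Ici.mpr hx) hx
    have h2 : 0 < Real.exp (x/2) := Real.exp_pos _
    have : Ai x ≤ (Ai a * Real.exp (a/2)) / Real.exp (x/2) := (le_div_iff₀ h2).mpr hm
    rwa [Real.exp_neg, ← div_eq_mul_inv]
  set C := Ai a * Real.exp (a/2) with hC
  have hrhs : Tendsto (fun x : ℝ => (1/2) * C^2 * (x ^ ((3:ℝ)/2) * Real.exp (-1 * x))) atTop (nhds 0) := by
    have := tendsto_rpow_mul_exp_neg_mul_atTop_nhds_zero ((3:ℝ)/2) 1 one_pos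
    simpa using (this.const_mul ((1/2) * C^2))
  apply squeeze_zero' ?_ ?_ hrhs
  · filter_upwards [eventually_ge_atTop (1:ℝ)] with x hx1
    have := hpos x hx1
    positivity
  · filter_upwards [eventually_ge_atTop a, eventually_ge_atTop (1:ℝ)] with x hx hx1
    have hb := hbound x hx
    have hAp := (hpos x hx1).le
    have hxp : (0:ℝ) < x ^ ((3:ℝ)/2) := Real.rpow_pos_of_pos (by linarith) _
    have h1 : Ai x ^ 2 ≤ C^2 * Real.exp (-1*x) := by
      have hCe : 0 ≤ C * Real.exp (-(x/2)) := le_trans hAp hb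
      calc Ai x ^ 2 ≤ (C * Real.exp (-(x/2)))^2 := by nlinarith
      _ = C^2 * Real.exp (-1*x) := by
          have hsq : Real.exp (-(x/2)) ^ 2 = Real.exp (-1 * x) := by
            rw [← Real.exp_nat_mul]; congr 1; push_cast; ring
          rw [mul_pow, hsq]
    calc (1/2) * x ^ ((3:ℝ)/2) * Ai x ^ 2 ≤ (1/2) * x ^ ((3:ℝ)/2) * (C^2 * Real.exp (-1*x)) := by
          nlinarith
    _ = (1/2) * C^2 * (x ^ ((3:ℝ)/2) * Real.exp (-1 * x)) := by ring

private lemma part1 (Ai : ℝ → ℝ) (hAi : ContDiff ℝ 2 Ai) (hpos : ∀ x ≥ (1:ℝ), 0 < Ai x)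
    (hasym : Tendsto (fun x => deriv Ai x / (Real.sqrt x * Ai x)) atTop (nhds (-1)))
    (hF0 : Tendsto (fun x => ∫ t in Set.Ioi x, t ^ 2 * (Ai t) ^ 2) atTop (nhds 0))
    (hF' : ∀ x : ℝ, 1 < x → HasDerivAt (fun y => ∫ t in Set.Ioi y, t ^ 2 * (Ai t) ^ 2)
        (-(x ^ 2 * (Ai x) ^ 2)) x)
    (hg0 : Tendsto (fun x => (1/2) * x ^ ((3:ℝ)/2) * Ai x ^ 2) atTop (nhds 0)) :
    Tendsto (fun x => ((∫ t in Set.Ioi x, t ^ 2 * (Ai t) ^ 2) / (Ai x) ^ 2) /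
        ((1 / 2) * x ^ ((3:ℝ) / 2))) atTop (nhds 1) := by
  have hAiD : ∀ x, HasDerivAt Ai (deriv Ai x) x :=
    fun x => ((hAi.differentiable (by simp)) x).hasDerivAt
  set g : ℝ → ℝ := fun x => (Ai x) ^ 2 * ((1/2) * x ^ ((3:ℝ)/2)) with hgdef
  set g' : ℝ → ℝ := fun x =>
    (2 * Ai x ^ 1 * deriv Ai x) * ((1/2) * x ^ ((3:ℝ)/2))
      + (Ai x) ^ 2 * ((1/2) * ((3:ℝ)/2 * x ^ ((3:ℝ)/2 - 1))) with hg'def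
  have hgD : ∀ x : ℝ, 0 < x → HasDerivAt g (g' x) x := by
    intro x hx
    have h1 : HasDerivAt (fun y : ℝ => (Ai y) ^ 2) (2 * Ai x ^ 1 * deriv Ai x) x := by
      simpa using (hAiD x).fun_pow 2
    have h2 : HasDerivAt (fun y : ℝ => (1/2) * y ^ ((3:ℝ)/2))
        ((1/2) * ((3:ℝ)/2 * x ^ ((3:ℝ)/2 - 1))) x :=
      (Real.hasDerivAt_rpow_const (Or.inl (ne_of_gt hx))).const_mul (1/2)
    exact h1.mul h2
  set D : ℝ → ℝ := fun x => deriv Ai x / (Real.sqrt x * Ai x) + (3/4) * x ^ (-(3:ℝ)/2) with hDdef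
  have hDlim : Tendsto D atTop (nhds (-1)) := by
    have h0 : Tendsto (fun x : ℝ => (3/4) * x ^ (-(3:ℝ)/2)) atTop (nhds 0) := by
      have := (tendsto_rpow_neg_atTop (y := (3:ℝ)/2) (by norm_num)).const_mul ((3:ℝ)/4)
      simpa [neg_div] using this
    simpa using hasym.add h0
  have hDneg : ∀ᶠ x in atTop, D x < -1/2 :=
    hDlim.eventually_lt_const (by norm_num)
  have hgfact : ∀ x : ℝ, 1 ≤ x → g' x = (x ^ 2 * (Ai x) ^ 2) * D x := by
    intro x hx
    have hx0 : (0:ℝ) < x := by linarith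
    have hs0 : 0 < Real.sqrt x := Real.sqrt_pos.mpr hx0
    have hAx : Ai x ≠ 0 := ne_of_gt (hpos x hx)
    have e1 : x ^ ((3:ℝ)/2) = Real.sqrt x ^ 3 := by
      simpa using rpow_half_nat x hx0.le 3
    have e2 : x ^ ((3:ℝ)/2 - 1) = Real.sqrt x ^ 1 := by
      rw [show (3:ℝ)/2 - 1 = (1:ℝ)/2 by norm_num]
      simpa using rpow_half_nat x hx0.le 1
    have e3 : x ^ (-(3:ℝ)/2) = (Real.sqrt x ^ 3)⁻¹ := by
      rw [show (-(3:ℝ))/2 = -((3:ℝ)/2) by norm_num, Real.rpow_neg hx0.le, e1]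
    rw [hg'def, hDdef]
    simp only []
    rw [e1, e2, e3]
    field_simp
    linear_combination (Real.sqrt x^2 + x) * (12*Ai x + 16*deriv Ai x*Real.sqrt x^2) *
      (Real.sq_sqrt hx0.le)
  have heq : ∀ᶠ x in atTop, -(x ^ 2 * (Ai x) ^ 2) / g' x = -1 / D x := by
    filter_upwards [eventually_ge_atTop (1:ℝ), hDneg] with x hx hD
    rw [hgfact x hx]
    have hx0 : (0:ℝ) < x := by linarith
    have hAx : Ai x ≠ 0 := ne_of_gt (hpos x hx)
    rw [show -(x ^ 2 * Ai x ^ 2) = (x ^ 2 * Ai x ^ 2) * (-1) by ring]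
    rw [mul_div_mul_left _ _ (by positivity)]
  have hg'ne : ∀ᶠ x in atTop, g' x ≠ 0 := by
    filter_upwards [eventually_ge_atTop (1:ℝ), hDneg] with x hx hD
    rw [hgfact x hx]
    have hx0 : (0:ℝ) < x := by linarith
    have hAx : Ai x ≠ 0 := ne_of_gt (hpos x hx)
    apply mul_ne_zero (by positivity)
    intro hc; rw [hc] at hD; norm_num at hD
  have hdiv : Tendsto (fun x => -(x ^ 2 * (Ai x) ^ 2) / g' x) atTop (nhds 1) := by
    apply Tendsto.congr' (heq.mono (fun x hx => hx.symm))
    have : Tendsto (fun x => -1 / D x) atTop (nhds ((-1) / (-1))) :=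
      tendsto_const_nhds.div hDlim (by norm_num)
    simpa using this
  have hmain := HasDerivAt.lhopital_zero_atTop
    (f' := fun x => -(x ^ 2 * (Ai x) ^ 2)) (g' := g')
    (by filter_upwards [eventually_gt_atTop (1:ℝ)] with x hx using hF' x hx)
    (by filter_upwards [eventually_gt_atTop (0:ℝ)] with x hx using hgD x hx)
    hg'ne hF0 (by apply hg0.congr (fun x => by rw [hgdef]; ring)) hdiv
  apply hmain.congr (fun x => ?_)
  rw [div_div, hgdef]

private lemma part2 (h h' : ℝ → ℝ)
    (hder : ∀ x ≥ (1:ℝ), HasDerivAt h (h' x) x)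
    (hL : Tendsto (fun x => h' x / ((1/2) * x ^ ((3:ℝ)/2))) atTop (nhds 1)) :
    Tendsto (fun x => h x / ((1/5) * x ^ ((5:ℝ)/2))) atTop (nhds 1) := by
  set c : ℝ → ℝ := fun x => (1/5) * x ^ ((5:ℝ)/2) with hcdef
  have hcD : ∀ x : ℝ, 1 ≤ x → HasDerivAt c ((1/2) * x ^ ((3:ℝ)/2)) x := by
    intro x hx
    have hx0 : x ≠ 0 := by intro hc; rw [hc] at hx; norm_num at hx
    have := (Real.hasDerivAt_rpow_const (p := (5:ℝ)/2) (Or.inl hx0)).const_mul ((1:ℝ)/5)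
    refine this.congr_deriv ?_
    rw [show (5:ℝ)/2 - 1 = (3:ℝ)/2 by norm_num]
    ring
  have hcpos : ∀ x : ℝ, 1 ≤ x → 0 < c x := by
    intro x hx
    have : 0 < x ^ ((5:ℝ)/2) := Real.rpow_pos_of_pos (by linarith) _
    rw [hcdef]; positivity
  have hcpos' : ∀ x : ℝ, 1 ≤ x → 0 < (1/2) * x ^ ((3:ℝ)/2) := by
    intro x hx
    have : 0 < x ^ ((3:ℝ)/2) := Real.rpow_pos_of_pos (by linarith) _
    positivity
  have hctop : Tendsto c atTop atTop := by
    apply Tendsto.const_mul_atTop (by norm_num : (0:ℝ) < 1/5)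
    exact tendsto_rpow_atTop (by norm_num)
  rw [Metric.tendsto_atTop]
  intro ε hε
  set ε' : ℝ := min (ε/3) 1 with hε'def
  have hε'pos : 0 < ε' := lt_min (by linarith) one_pos
  have hε'le : ε' ≤ 1 := min_le_right _ _
  have hε'e : ε' ≤ ε/3 := min_le_left _ _
  obtain ⟨N0, hN0⟩ := Metric.tendsto_atTop.mp hL ε' hε'pos
  set a : ℝ := max N0 1 with hadef
  have ha1 : (1:ℝ) ≤ a := le_max_right _ _
  have hbnd : ∀ t : ℝ, a ≤ t →
      (1 - ε') * ((1/2) * t ^ ((3:ℝ)/2)) ≤ h' t ∧ h' t ≤ (1 + ε') * ((1/2) * t ^ ((3:ℝ)/2)) := by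
    intro t ht
    have ht1 : (1:ℝ) ≤ t := le_trans ha1 ht
    have := hN0 t (le_trans (le_max_left _ _) ht)
    rw [Real.dist_eq, abs_lt] at this
    have hp := hcpos' t ht1
    constructor
    · have h1 : 1 - ε' < h' t / ((1/2) * t ^ ((3:ℝ)/2)) := by linarith [this.1]
      have := (lt_div_iff₀ hp).mp h1
      linarith
    · have h1 : h' t / ((1/2) * t ^ ((3:ℝ)/2)) < 1 + ε' := by linarith [this.2]
      have := (div_lt_iff₀ hp).mp h1
      linarith
  have hmono : ∀ x : ℝ, a ≤ x →
      h x ≤ h a + (1 + ε') * (c x - c a) ∧ h a + (1 - ε') * (c x - c a) ≤ h x := by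
    intro x hx
    constructor
    · have hu : MonotoneOn (fun y => (1 + ε') * c y - h y) (Set.Ici a) := by
        apply monotoneOn_of_deriv_nonneg (convex_Ici a)
        · intro y hy
          have hy1 : (1:ℝ) ≤ y := le_trans ha1 hy
          exact (((hcD y hy1).const_mul _).sub (hder y hy1)).continuousAt.continuousWithinAt
        · intro y hy
          rw [interior_Ici] at hy
          have hy1 : (1:ℝ) ≤ y := le_trans ha1 (le_of_lt hy)
          exact (((hcD y hy1).const_mul _).sub (hder y hy1)).differentiableAt.differentiableWithinAt
        · intro y hy
          rw [interior_Ici] at hy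
          have hy1 : (1:ℝ) ≤ y := le_trans ha1 (le_of_lt hy)
          rw [HasDerivAt.deriv (f := fun y => (1 + ε') * c y - h y) (((hcD y hy1).const_mul _).sub (hder y hy1))]
          have := (hbnd y (le_of_lt hy)).2
          linarith
      have := hu (Set.mem_Ici.mpr le_rfl) (Set.mem_Ici.mpr hx) hx
      simp only [] at this
      linarith
    · have hv : MonotoneOn (fun y => h y - (1 - ε') * c y) (Set.Ici a) := by
        apply monotoneOn_of_deriv_nonneg (convex_Ici a)
        · intro y hy
          have hy1 : (1:ℝ) ≤ y := le_trans ha1 hy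
          exact ((hder y hy1).sub ((hcD y hy1).const_mul _)).continuousAt.continuousWithinAt
        · intro y hy
          rw [interior_Ici] at hy
          have hy1 : (1:ℝ) ≤ y := le_trans ha1 (le_of_lt hy)
          exact ((hder y hy1).sub ((hcD y hy1).const_mul _)).differentiableAt.differentiableWithinAt
        · intro y hy
          rw [interior_Ici] at hy
          have hy1 : (1:ℝ) ≤ y := le_trans ha1 (le_of_lt hy)
          rw [HasDerivAt.deriv (f := fun y => h y - (1 - ε') * c y) ((hder y hy1).sub ((hcD y hy1).const_mul _))]
          have := (hbnd y (le_of_lt hy)).1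
          linarith
      have := hv (Set.mem_Ici.mpr le_rfl) (Set.mem_Ici.mpr hx) hx
      simp only [] at this
      linarith
  set K : ℝ := |h a| + 2 * |c a| with hKdef
  have hK0 : Tendsto (fun x => K / c x) atTop (nhds 0) :=
    Tendsto.div_atTop tendsto_const_nhds hctop
  obtain ⟨N1, hN1⟩ := eventually_atTop.mp (hK0.eventually_lt_const hε'pos)
  refine ⟨max a N1, fun x hx => ?_⟩
  have hxa : a ≤ x := le_trans (le_max_left _ _) hx
  have hx1 : (1:ℝ) ≤ x := le_trans ha1 hxa
  have hcx := hcpos x hx1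
  have hKc := hN1 x (le_trans (le_max_right _ _) hx)
  obtain ⟨hup, hlo⟩ := hmono x hxa
  have hKa : 0 ≤ K := by positivity
  have habs : |h x / c x - 1| ≤ ε' + K / c x := by
    have hub : h x - c x ≤ ε' * c x + K := by
      nlinarith [le_abs_self (h a), neg_abs_le (c a), abs_nonneg (c a), le_abs_self (c a),
        neg_abs_le (h a)]
    have hlb : -(ε' * c x + K) ≤ h x - c x := by
      nlinarith [le_abs_self (h a), neg_abs_le (c a), abs_nonneg (c a), le_abs_self (c a),
        neg_abs_le (h a)]
    have habs2 : |h x - c x| ≤ ε' * c x + K := abs_le.mpr ⟨hlb, hub⟩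
    calc |h x / c x - 1| = |h x - c x| / c x := by
          rw [show h x / c x - 1 = (h x - c x) / c x by field_simp, abs_div, abs_of_pos hcx]
    _ ≤ (ε' * c x + K) / c x := by gcongr
    _ = ε' + K / c x := by rw [add_div, mul_div_cancel_right₀ _ (ne_of_gt hcx)]
  have hdist : dist (h x / c x) 1 ≤ ε' + K / c x := by rw [Real.dist_eq]; exact habs
  have h2 : ε' + K / c x < 2 * ε' := by linarith
  have h3 : 2 * ε' ≤ 2 * (ε/3) := by linarith
  linarith [hdist]

/-- Asymptotics of the barrier `Ψ` solving `-Ψ'' + xΨ = x² Ai`, `Ψ(1)=1`, `Ψ(∞)=0`: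
with `Ψ = Ai·h` and `h' = (∫_x^∞ t² Ai² dt)/Ai²`, one has `h' ~ (1/2)x^{3/2}`,
`h ~ (1/5)x^{5/2}`, `Ψ ~ (1/5)x^{5/2}Ai`, and `Ψ' ~ -(1/5)x³ Ai` as `x → ∞`. -/
theorem stmt11 (Ai Ψ h : ℝ → ℝ) (hAi : ContDiff ℝ 2 Ai)
    (heqAi : ∀ x, deriv (deriv Ai) x = x * Ai x)
    (hpos : ∀ x ≥ (1:ℝ), 0 < Ai x)
    (hdec : ∀ x ≥ (1:ℝ), deriv Ai x < 0)
    (hasym : Tendsto (fun x => deriv Ai x / (Real.sqrt x * Ai x)) atTop (nhds (-1)))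
    (hInt : IntegrableOn (fun t => t ^ 2 * (Ai t) ^ 2) (Set.Ici 1))
    (hh : ∀ x ≥ (1:ℝ), HasDerivAt h ((∫ t in Set.Ioi x, t ^ 2 * (Ai t) ^ 2) / (Ai x) ^ 2) x)
    (hΨ : ∀ x, Ψ x = Ai x * h x)
    (hΨeq : ∀ x ≥ (1:ℝ), -(deriv (deriv Ψ) x) + x * Ψ x = x ^ 2 * Ai x)
    (hΨ1 : Ψ 1 = 1) (hΨpos : ∀ x ≥ (1:ℝ), 0 < Ψ x)
    (hΨ0 : Tendsto Ψ atTop (nhds 0)) :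
    Tendsto (fun x => ((∫ t in Set.Ioi x, t ^ 2 * (Ai t) ^ 2) / (Ai x) ^ 2) /
        ((1 / 2) * x ^ ((3:ℝ) / 2))) atTop (nhds 1) ∧
    Tendsto (fun x => h x / ((1 / 5) * x ^ ((5:ℝ) / 2))) atTop (nhds 1) ∧
    Tendsto (fun x => Ψ x / ((1 / 5) * x ^ ((5:ℝ) / 2) * Ai x)) atTop (nhds 1) ∧
    Tendsto (fun x => deriv Ψ x / (-(1 / 5) * x ^ 3 * Ai x)) atTop (nhds 1) := by
  have hAiD : ∀ x, HasDerivAt Ai (deriv Ai x) x :=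
    fun x => ((hAi.differentiable (by simp)) x).hasDerivAt
  have hcont : Continuous (fun t => t ^ 2 * (Ai t) ^ 2) := by
    have := hAi.continuous
    continuity
  have hF0 : Tendsto (fun x => ∫ t in Set.Ioi x, t ^ 2 * (Ai t) ^ 2) atTop (nhds 0) :=
    tail_tendsto_zero _ hInt
  have hF' : ∀ x : ℝ, 1 < x → HasDerivAt (fun y => ∫ t in Set.Ioi y, t ^ 2 * (Ai t) ^ 2)
      (-(x ^ 2 * (Ai x) ^ 2)) x := by
    intro x hx
    simpa using tail_hasDeriv _ hcont hInt hx
  have hg0 := decay Ai hAi hpos hasym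
  have L1 := part1 Ai hAi hpos hasym hF0 hF' hg0
  have L2 := part2 h (fun x => (∫ t in Set.Ioi x, t ^ 2 * (Ai t) ^ 2) / (Ai x) ^ 2) hh L1
  refine ⟨L1, L2, ?_, ?_⟩
  · -- part 3
    apply L2.congr'
    filter_upwards [eventually_ge_atTop (1:ℝ)] with x hx
    have hAx : Ai x ≠ 0 := ne_of_gt (hpos x hx)
    rw [hΨ x, mul_comm (Ai x) (h x), mul_div_mul_right _ _ hAx]
  · -- part 4
    set h' : ℝ → ℝ := fun x => (∫ t in Set.Ioi x, t ^ 2 * (Ai t) ^ 2) / (Ai x) ^ 2 with hh'def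
    have hΨfun : Ψ = fun x => Ai x * h x := funext hΨ
    have hΨD : ∀ x : ℝ, 1 ≤ x → deriv Ψ x = deriv Ai x * h x + Ai x * h' x := by
      intro x hx
      rw [hΨfun]
      exact ((hAiD x).mul (hh x hx)).deriv
    set G : ℝ → ℝ := fun x =>
      (-(deriv Ai x / (Real.sqrt x * Ai x))) * (h x / ((1/5) * x ^ ((5:ℝ)/2)))
        + (h' x / ((1/2) * x ^ ((3:ℝ)/2))) * (-(5/2) * x ^ (-(3:ℝ)/2)) with hGdef
    have hGlim : Tendsto G atTop (nhds 1) := by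
      have t1 : Tendsto (fun x => (-(deriv Ai x / (Real.sqrt x * Ai x))) *
          (h x / ((1/5) * x ^ ((5:ℝ)/2)))) atTop (nhds 1) := by
        have := (hasym.neg).mul L2
        simpa using this
      have t2 : Tendsto (fun x => (h' x / ((1/2) * x ^ ((3:ℝ)/2))) *
          (-(5/2) * x ^ (-(3:ℝ)/2))) atTop (nhds 0) := by
        have h0 : Tendsto (fun x : ℝ => -(5/2) * x ^ (-(3:ℝ)/2)) atTop (nhds 0) := by
          have := (tendsto_rpow_neg_atTop (y := (3:ℝ)/2) (by norm_num)).const_mul (-(5:ℝ)/2)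
          simpa [neg_div] using this
        simpa using L1.mul h0
      exact (by norm_num : (1:ℝ) + 0 = 1) ▸ t1.add t2
    apply hGlim.congr'
    filter_upwards [eventually_ge_atTop (1:ℝ)] with x hx
    have hx0 : (0:ℝ) < x := by linarith
    have hs0 : 0 < Real.sqrt x := Real.sqrt_pos.mpr hx0
    have hAx : Ai x ≠ 0 := ne_of_gt (hpos x hx)
    have hsq : Real.sqrt x ^ 2 = x := Real.sq_sqrt hx0.le
    have e5 : x ^ ((5:ℝ)/2) = Real.sqrt x ^ 5 := by
      simpa using rpow_half_nat x hx0.le 5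
    have e3 : x ^ ((3:ℝ)/2) = Real.sqrt x ^ 3 := by
      simpa using rpow_half_nat x hx0.le 3
    have e3' : x ^ (-(3:ℝ)/2) = (Real.sqrt x ^ 3)⁻¹ := by
      rw [show (-(3:ℝ))/2 = -((3:ℝ)/2) by norm_num, Real.rpow_neg hx0.le, e3]
    have e6 : x ^ 3 = Real.sqrt x ^ 6 := by
      linear_combination (-(x^2 + x * Real.sqrt x ^ 2 + Real.sqrt x ^ 4)) * hsq
    rw [hGdef]
    simp only []
    rw [hΨD x hx, e5, e3, e3', e6]
    field_simp
    ring
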